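/- The map that sends a finitely supported function ν : X → ℕ to the finite list of vectors (ν(x)·x) for x in the support of ν, listed in increasing order of the slope x₂/x₁, is a bijection from the set of finitely supported functions ν : X → ℕ onto the set of finite lists (w⁽¹⁾,…,w⁽ᵐ⁾) of nonzero vectors of ℕ×ℕ satisfying w⁽ⁱ⁾₁·w⁽ⁱ⁺¹⁾₂ > w⁽ⁱ⁾₂·w⁽ⁱ⁺¹⁾₁ for all 1 ≤ i < m (i.e., onto the edge-vector lists of convex polygonal lines issuing from 0 whose sides make angles in [0,π/2] with the horizontal axis, listed in strictly increasing order of slope). -/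

import Mathlib

/-- The set of pairs of coprime nonnegative integers (including `(0,1)` and `(1,0)`). -/
abbrev Xc : Type := {x : ℕ × ℕ // Nat.gcd x.1 x.2 = 1}

/-- `a` has strictly smaller slope than `b` (slope of `x` is `x₂/x₁`, with slope `∞` for `x₁ = 0`). -/
def slopeLt (a b : Xc) : Prop := a.val.2 * b.val.1 < b.val.2 * a.val.1

/-- `L` is the list of the vectors `ν(x)·x`, for `x` in the support of `ν`, listed in
increasing order of the slope `x₂/x₁`. -/
def IsEdgeList (ν : Xc →₀ ℕ) (L : List (ℕ × ℕ)) : Prop :=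
  ∃ xs : List Xc, xs.toFinset = ν.support ∧ xs.Chain' slopeLt ∧
    L = xs.map fun x => (ν x * x.val.1, ν x * x.val.2)

/-- `L` is a list `(w⁽¹⁾, …, w⁽ᵐ⁾)` of nonzero vectors of `ℕ × ℕ` with
`w⁽ⁱ⁾₁·w⁽ⁱ⁺¹⁾₂ > w⁽ⁱ⁾₂·w⁽ⁱ⁺¹⁾₁` for all `1 ≤ i < m`, i.e. the edge-vector list of a convex
polygonal line issuing from `0` whose sides make angles in `[0, π/2]` with the horizontal
axis, listed in strictly increasing order of slope. -/
def ConvexEdgeList (L : List (ℕ × ℕ)) : Prop :=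
  (∀ w ∈ L, w ≠ (0, 0)) ∧ L.Chain' fun v w => v.1 * w.2 > v.2 * w.1

-- coprime pairs with equal cross products are equal
lemma Xc.cross_eq {a b : Xc} (h : a.val.2 * b.val.1 = b.val.2 * a.val.1) : a = b := by
  obtain ⟨⟨a1, a2⟩, ha⟩ := a
  obtain ⟨⟨b1, b2⟩, hb⟩ := b
  simp only at h
  have hca : Nat.Coprime a1 a2 := ha
  have hcb : Nat.Coprime b1 b2 := hb
  have h1 : a1 ∣ b1 := hca.dvd_of_dvd_mul_left ⟨b2, by rw [h]; ring⟩
  have h2 : b1 ∣ a1 := hcb.dvd_of_dvd_mul_left ⟨a2, by rw [← h]; ring⟩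
  have e1 : a1 = b1 := Nat.dvd_antisymm h1 h2
  rcases Nat.eq_zero_or_pos a1 with h0 | hpos
  · have ha2 : a2 = 1 := by simpa [h0] using ha
    have hb2 : b2 = 1 := by simpa [← e1, h0] using hb
    simp [h0, ← e1, ha2, hb2]
  · have : a2 = b2 := by
      subst e1
      exact Nat.eq_of_mul_eq_mul_right hpos (by linarith [h])
    simp [e1, this]

def slopeLE (a b : Xc) : Prop := a.val.2 * b.val.1 ≤ b.val.2 * a.val.1

instance : DecidableRel slopeLE := fun a b => inferInstanceAs (Decidable (_ ≤ _))

instance : IsTrans Xc slopeLE := ⟨by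
  intro a b c hab hbc
  show a.val.2 * c.val.1 ≤ c.val.2 * a.val.1
  rcases Nat.eq_zero_or_pos b.val.1 with h0 | hpos
  · have hb2 : b.val.2 = 1 := by
      have := b.prop; simpa [h0] using this
    have hc1 : c.val.1 = 0 := by
      have hbc' : b.val.2 * c.val.1 ≤ c.val.2 * b.val.1 := hbc
      simp only [h0, hb2, one_mul, Nat.mul_zero, Nat.le_zero] at hbc'
      exact hbc'
    simp [hc1]
  · refine Nat.le_of_mul_le_mul_left ?_ hpos
    calc b.val.1 * (a.val.2 * c.val.1) = (a.val.2 * b.val.1) * c.val.1 := by ring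
      _ ≤ (b.val.2 * a.val.1) * c.val.1 := Nat.mul_le_mul_right _ hab
      _ = (b.val.2 * c.val.1) * a.val.1 := by ring
      _ ≤ (c.val.2 * b.val.1) * a.val.1 := Nat.mul_le_mul_right _ hbc
      _ = b.val.1 * (c.val.2 * a.val.1) := by ring⟩

instance : IsAntisymm Xc slopeLE := ⟨fun _ _ h1 h2 => Xc.cross_eq (Nat.le_antisymm h1 h2)⟩

instance : IsTotal Xc slopeLE := ⟨fun _ _ => Nat.le_total _ _⟩

lemma slopeLt_iff {a b : Xc} : slopeLt a b ↔ slopeLE a b ∧ ¬ slopeLE b a := by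
  unfold slopeLt slopeLE; omega

lemma slopeLt_of_le_ne {a b : Xc} (h : slopeLE a b) (hne : a ≠ b) : slopeLt a b :=
  Nat.lt_of_le_of_ne h fun he => hne (Xc.cross_eq he)

lemma slopeLt.trans {a b c : Xc} (h1 : slopeLt a b) (h2 : slopeLt b c) : slopeLt a c := by
  rw [slopeLt_iff] at h1 h2 ⊢
  exact ⟨Trans.trans h1.1 h2.1, fun hca => h1.2 (Trans.trans h2.1 hca)⟩

instance : IsTrans Xc slopeLt := ⟨fun _ _ _ => slopeLt.trans⟩

lemma slopeLt_ne {a b : Xc} (h : slopeLt a b) : a ≠ b := by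
  rintro rfl
  exact lt_irrefl _ h

def normX (w : ℕ × ℕ) : Xc :=
  if h : Nat.gcd w.1 w.2 = 0 then ⟨(0, 1), rfl⟩
  else ⟨(w.1 / Nat.gcd w.1 w.2, w.2 / Nat.gcd w.1 w.2),
    Nat.coprime_div_gcd_div_gcd (Nat.pos_of_ne_zero h)⟩

lemma gcd_smul (x : Xc) (c : ℕ) : Nat.gcd (c * x.val.1) (c * x.val.2) = c := by
  rw [Nat.gcd_mul_left, x.prop, mul_one]

lemma normX_smul (x : Xc) {c : ℕ} (hc : c ≠ 0) : normX (c * x.val.1, c * x.val.2) = x := by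
  unfold normX
  rw [dif_neg]
  · apply Subtype.ext
    have hg : Nat.gcd (c * x.val.1) (c * x.val.2) = c := gcd_smul x c
    simp only [hg]
    exact Prod.ext (Nat.mul_div_cancel_left _ (Nat.pos_of_ne_zero hc))
      (Nat.mul_div_cancel_left _ (Nat.pos_of_ne_zero hc))
  · simp only [gcd_smul x c]; exact hc

lemma smul_normX {w : ℕ × ℕ} (hw : w ≠ (0, 0)) :
    (Nat.gcd w.1 w.2 * (normX w).val.1, Nat.gcd w.1 w.2 * (normX w).val.2) = w := by
  have hg : Nat.gcd w.1 w.2 ≠ 0 := by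
    rw [Ne, Nat.gcd_eq_zero_iff]
    intro ⟨h1, h2⟩
    exact hw (Prod.ext h1 h2)
  unfold normX
  rw [dif_neg hg]
  exact Prod.ext (Nat.mul_div_cancel' (Nat.gcd_dvd_left _ _))
    (Nat.mul_div_cancel' (Nat.gcd_dvd_right _ _))

lemma chain'_imp_mem {α : Type*} {R S : α → α → Prop} :
    ∀ {l : List α}, (∀ a ∈ l, ∀ b ∈ l, R a b → S a b) → l.Chain' R → l.Chain' S
  | [], _, _ => by exact List.isChain_nil
  | [_], _, _ => by exact List.isChain_singleton _
  | a :: b :: l, h, hc => by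
    rw [List.Chain', List.isChain_cons_cons] at hc ⊢
    exact ⟨h a (by simp) b (by simp) hc.1,
      chain'_imp_mem (fun x hx y hy => h x (List.mem_cons_of_mem _ hx) y
        (List.mem_cons_of_mem _ hy)) hc.2⟩

noncomputable def Fmap (ν : Xc →₀ ℕ) : List (ℕ × ℕ) :=
  (ν.support.sort slopeLE).map fun x => (ν x * x.val.1, ν x * x.val.2)

lemma sort_pairwise_slopeLt (s : Finset Xc) : (s.sort slopeLE).Pairwise slopeLt := by
  have h1 : (s.sort slopeLE).Pairwise slopeLE := Finset.pairwise_sort _ _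
  have h2 : (s.sort slopeLE).Pairwise (· ≠ ·) := Finset.sort_nodup _ _
  exact (h1.and h2).imp fun h => slopeLt_of_le_ne h.1 h.2

lemma isEdgeList_Fmap (ν : Xc →₀ ℕ) :
    ∃ xs : List Xc, xs.toFinset = ν.support ∧ xs.Chain' slopeLt ∧
      Fmap ν = xs.map fun x => (ν x * x.val.1, ν x * x.val.2) :=
  ⟨ν.support.sort slopeLE, Finset.sort_toFinset _ _, (sort_pairwise_slopeLt _).isChain, rfl⟩

lemma Fmap_convex (ν : Xc →₀ ℕ) :
    (∀ w ∈ Fmap ν, w ≠ (0, 0)) ∧ (Fmap ν).Chain' fun v w => v.1 * w.2 > v.2 * w.1 := by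
  constructor
  · rintro w hw
    simp only [Fmap, List.mem_map, Finset.mem_sort, Finsupp.mem_support_iff] at hw
    obtain ⟨x, hx, rfl⟩ := hw
    intro hcon
    have h1 : ν x * x.val.1 = 0 := congrArg Prod.fst hcon
    have h2 : ν x * x.val.2 = 0 := congrArg Prod.snd hcon
    have hgcd := x.prop
    rcases Nat.mul_eq_zero.mp h1 with h | h
    · exact hx h
    · rcases Nat.mul_eq_zero.mp h2 with h' | h'
      · exact hx h'
      · rw [h, h'] at hgcd; simp at hgcd
  · rw [Fmap, List.Chain', List.isChain_map]
    refine (List.Pairwise.imp_of_mem ?_ (sort_pairwise_slopeLt ν.support)).isChain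
    intro a b ha hb hab
    rw [Finset.mem_sort, Finsupp.mem_support_iff] at ha hb
    have ha' : 0 < ν a := Nat.pos_of_ne_zero ha
    have hb' : 0 < ν b := Nat.pos_of_ne_zero hb
    have hab' : a.val.2 * b.val.1 < b.val.2 * a.val.1 := hab
    show (ν a * a.val.1) * (ν b * b.val.2) > (ν a * a.val.2) * (ν b * b.val.1)
    calc (ν a * a.val.2) * (ν b * b.val.1) = (ν a * ν b) * (a.val.2 * b.val.1) := by ring
      _ < (ν a * ν b) * (b.val.2 * a.val.1) :=
          mul_lt_mul_of_pos_left hab' (Nat.mul_pos ha' hb')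
      _ = (ν a * a.val.1) * (ν b * b.val.2) := by ring

lemma eq_of_smul_eq {x y : Xc} {c d : ℕ} (hc : c ≠ 0) (hd : d ≠ 0)
    (h : (c * x.val.1, c * x.val.2) = (d * y.val.1, d * y.val.2)) : x = y ∧ c = d := by
  have h1 : x = normX (c * x.val.1, c * x.val.2) := (normX_smul x hc).symm
  rw [h, normX_smul y hd] at h1
  have e1 : c * x.val.1 = d * y.val.1 := congrArg Prod.fst h
  have e2 : c * x.val.2 = d * y.val.2 := congrArg Prod.snd h
  have h2 : c = Nat.gcd (c * x.val.1) (c * x.val.2) := (gcd_smul x c).symm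
  rw [e1, e2, gcd_smul] at h2
  exact ⟨h1, h2⟩

lemma Fmap_eq_aux {ν μ : Xc →₀ ℕ} (h : Fmap ν = Fmap μ) :
    ∀ x ∈ ν.support, x ∈ μ.support ∧ ν x = μ x := by
  intro x hx
  have hν : ν x ≠ 0 := Finsupp.mem_support_iff.mp hx
  have hxs : x ∈ ν.support.sort slopeLE := (Finset.mem_sort _).2 hx
  have hw : (ν x * x.val.1, ν x * x.val.2) ∈ Fmap ν := List.mem_map_of_mem hxs
  rw [h] at hw
  simp only [Fmap, List.mem_map, Finset.mem_sort, Finsupp.mem_support_iff] at hw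
  obtain ⟨y, hy, hxy⟩ := hw
  obtain ⟨hyx, hcd⟩ := eq_of_smul_eq hy hν hxy
  subst hyx
  exact ⟨Finsupp.mem_support_iff.mpr hy, hcd.symm⟩

lemma Fmap_injective : Function.Injective Fmap := by
  intro ν μ h
  ext x
  by_cases hx : x ∈ ν.support
  · exact (Fmap_eq_aux h x hx).2
  · by_cases hx' : x ∈ μ.support
    · exact absurd ((Fmap_eq_aux h.symm x hx').1) hx
    · rw [Finsupp.notMem_support_iff] at hx hx'
      rw [hx, hx']

noncomputable def invF (L : List (ℕ × ℕ)) : Xc →₀ ℕ :=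
  (L.map fun w => Finsupp.single (normX w) (Nat.gcd w.1 w.2)).sum

lemma GL_apply_not_mem : ∀ {L : List (ℕ × ℕ)} {x : Xc}, x ∉ L.map normX → invF L x = 0
  | [], x, _ => by simp [invF]
  | w :: L, x, hx => by
    simp only [List.map_cons, List.mem_cons, not_or] at hx
    simp only [invF, List.map_cons, List.sum_cons, Finsupp.add_apply]
    rw [Finsupp.single_eq_of_ne' (Ne.symm hx.1)]
    have := GL_apply_not_mem (L := L) (x := x) hx.2
    simp only [invF] at this
    rw [this]

lemma GL_apply_mem : ∀ {L : List (ℕ × ℕ)}, (L.map normX).Nodup →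
    ∀ {w}, w ∈ L → invF L (normX w) = Nat.gcd w.1 w.2
  | [], _, w, hw => by simp at hw
  | v :: L, hnd, w, hw => by
    simp only [List.map_cons, List.nodup_cons] at hnd
    simp only [invF, List.map_cons, List.sum_cons, Finsupp.add_apply]
    rcases List.mem_cons.mp hw with rfl | hw'
    · rw [Finsupp.single_eq_same]
      have : invF L (normX w) = 0 := GL_apply_not_mem hnd.1
      simp only [invF] at this
      rw [this, add_zero]
    · have hne : normX v ≠ normX w := fun he => hnd.1 (he ▸ List.mem_map_of_mem hw')
      rw [Finsupp.single_eq_of_ne' hne]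
      have := GL_apply_mem hnd.2 hw'
      simp only [invF] at this
      rw [this, zero_add]

lemma GL_support {L : List (ℕ × ℕ)} (hnz : ∀ w ∈ L, w ≠ (0, 0))
    (hnd : (L.map normX).Nodup) : (invF L).support = (L.map normX).toFinset := by
  ext x
  rw [Finsupp.mem_support_iff, List.mem_toFinset]
  constructor
  · intro hx
    by_contra hmem
    exact hx (GL_apply_not_mem hmem)
  · intro hx
    obtain ⟨w, hw, rfl⟩ := List.mem_map.1 hx
    rw [GL_apply_mem hnd hw, Ne, Nat.gcd_eq_zero_iff]
    intro ⟨h1, h2⟩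
    exact hnz w hw (Prod.ext h1 h2)

lemma Fmap_GL {L : List (ℕ × ℕ)} (hnz : ∀ w ∈ L, w ≠ (0, 0))
    (hch : L.Chain' fun v w => v.1 * w.2 > v.2 * w.1) : Fmap (invF L) = L := by
  have hchx : (L.map normX).Chain' slopeLt := by
    rw [List.Chain', List.isChain_map]
    refine chain'_imp_mem ?_ hch
    intro v hv w hw hvw
    have hgv : Nat.gcd v.1 v.2 ≠ 0 := by
      rw [Ne, Nat.gcd_eq_zero_iff]; intro ⟨h1, h2⟩; exact hnz v hv (Prod.ext h1 h2)
    have hgw : Nat.gcd w.1 w.2 ≠ 0 := by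
      rw [Ne, Nat.gcd_eq_zero_iff]; intro ⟨h1, h2⟩; exact hnz w hw (Prod.ext h1 h2)
    have ev := smul_normX (hnz v hv)
    have ew := smul_normX (hnz w hw)
    have ev1 : Nat.gcd v.1 v.2 * (normX v).val.1 = v.1 := congrArg Prod.fst ev
    have ev2 : Nat.gcd v.1 v.2 * (normX v).val.2 = v.2 := congrArg Prod.snd ev
    have ew1 : Nat.gcd w.1 w.2 * (normX w).val.1 = w.1 := congrArg Prod.fst ew
    have ew2 : Nat.gcd w.1 w.2 * (normX w).val.2 = w.2 := congrArg Prod.snd ew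
    show (normX v).val.2 * (normX w).val.1 < (normX w).val.2 * (normX v).val.1
    refine Nat.lt_of_mul_lt_mul_left (a := Nat.gcd v.1 v.2 * Nat.gcd w.1 w.2) ?_
    calc Nat.gcd v.1 v.2 * Nat.gcd w.1 w.2 * ((normX v).val.2 * (normX w).val.1)
        = (Nat.gcd v.1 v.2 * (normX v).val.2) * (Nat.gcd w.1 w.2 * (normX w).val.1) := by ring
      _ = v.2 * w.1 := by rw [ev2, ew1]
      _ < v.1 * w.2 := hvw
      _ = (Nat.gcd v.1 v.2 * (normX v).val.1) * (Nat.gcd w.1 w.2 * (normX w).val.2) := by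
          rw [ev1, ew2]
      _ = Nat.gcd v.1 v.2 * Nat.gcd w.1 w.2 * ((normX w).val.2 * (normX v).val.1) := by ring
  have hpx : (L.map normX).Pairwise slopeLt := List.isChain_iff_pairwise.mp hchx
  have hnd : (L.map normX).Nodup := hpx.imp slopeLt_ne
  have hsupp := GL_support hnz hnd
  have hsort : (invF L).support.sort slopeLE = L.map normX := by
    refine (fun hp hs => List.Perm.eq_of_pairwise (le := slopeLE) (fun _ _ _ _ h1 h2 => Xc.cross_eq (Nat.le_antisymm h1 h2)) (Finset.pairwise_sort _ _) hs hp) ?_ ?_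
    · refine List.perm_of_nodup_nodup_toFinset_eq (Finset.sort_nodup _ _) hnd ?_
      rw [Finset.sort_toFinset, hsupp]
    · exact hpx.imp fun h => Nat.le_of_lt h
  rw [Fmap, hsort, List.map_map]
  rw [show (fun x : Xc => (invF L x * x.val.1, invF L x * x.val.2)) ∘ normX
      = fun w => ((invF L (normX w)) * (normX w).val.1, (invF L (normX w)) * (normX w).val.2)
    from rfl]
  have : ∀ w ∈ L, ((invF L (normX w)) * (normX w).val.1, (invF L (normX w)) * (normX w).val.2) = w := by
    intro w hw
    rw [GL_apply_mem hnd hw]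
    exact smul_normX (hnz w hw)
  rw [List.map_congr_left this]
  exact List.map_id L

/-- The map sending a finitely supported `ν : X →₀ ℕ` to the list of the vectors `ν(x)·x`,
`x ∈ supp ν`, in increasing order of slope, is a bijection onto the set of edge-vector lists
of convex polygonal lines. -/
theorem statement0 :
    ∃ F : (Xc →₀ ℕ) → List (ℕ × ℕ),
      (∀ ν : Xc →₀ ℕ, IsEdgeList ν (F ν)) ∧
      Set.BijOn F Set.univ {L : List (ℕ × ℕ) | ConvexEdgeList L} := by
  refine ⟨Fmap, fun ν => isEdgeList_Fmap ν, ?_, ?_, ?_⟩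
  · intro ν _
    exact Fmap_convex ν
  · intro ν _ μ _ h
    exact Fmap_injective h
  · intro L hL
    exact ⟨invF L, trivial, Fmap_GL hL.1 hL.2⟩
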